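/- If v ∈ W is not a scalar multiple of X^r, then the K-linear span of the set {u_a(v) : a ∈ 𝔽} has dimension at least 2 over K. -/

import Mathlib

open MvPolynomial


private noncomputable def mm (r i : ℕ) : Fin 2 →₀ ℕ := Finsupp.single 0 i + Finsupp.single 1 (r - i)

private lemma mm_eq_iff (A B A' B' : ℕ) :
    (Finsupp.single (0 : Fin 2) A + Finsupp.single 1 B =
      Finsupp.single 0 A' + Finsupp.single 1 B') ↔ A = A' ∧ B = B' := by
  constructor
  · intro h
    have h0 := DFunLike.congr_fun h 0
    have h1 := DFunLike.congr_fun h 1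
    simp [Finsupp.single_apply] at h0 h1
    exact ⟨h0, h1⟩
  · rintro ⟨rfl, rfl⟩; rfl

private lemma mm_inj {r i i' : ℕ} (h : mm r i = mm r i') : i = i' := by
  have h0 := DFunLike.congr_fun h 0
  simp [mm, Finsupp.single_apply] at h0
  exact h0

private lemma coeff_aux {K : Type*} [CommSemiring K] (c : K) (A B : ℕ) :
    (C c : MvPolynomial (Fin 2) K) * (X 0 ^ A * X 1 ^ B)
      = monomial (Finsupp.single 0 A + Finsupp.single 1 B) c := by
  rw [X_pow_eq_monomial, X_pow_eq_monomial, monomial_mul, C_mul_monomial]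
  simp

private lemma gen_eq_monomial {K : Type*} [CommSemiring K] (r i : ℕ) :
    (X 0 : MvPolynomial (Fin 2) K) ^ i * X 1 ^ (r - i) = monomial (mm r i) 1 := by
  rw [← one_mul ((X 0 : MvPolynomial (Fin 2) K) ^ i * X 1 ^ (r - i)), ← C_1, coeff_aux, mm]

private lemma gen_self_coeff {K : Type*} [CommSemiring K] {r i i' : ℕ} :
    coeff (mm r i') ((X 0 : MvPolynomial (Fin 2) K) ^ i * X 1 ^ (r - i))
    = if i = i' then 1 else 0 := by
  rw [gen_eq_monomial, coeff_monomial, mm, mm]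
  by_cases h : i = i'
  · subst h; simp
  · rw [if_neg h, if_neg]
    intro hc
    exact h ((mm_eq_iff _ _ _ _).mp hc).1

private lemma gen_coeff {K : Type*} [CommSemiring K] (c : K) {r i j : ℕ} (hi : i ≤ r)
    (hj : j ≤ r) :
    coeff (mm r j) ((X 0 : MvPolynomial (Fin 2) K) ^ i * (C c * X 0 + X 1) ^ (r - i))
    = if i ≤ j then ((r - i).choose (j - i) : K) * c ^ (j - i) else 0 := by
  rw [mm]
  set m := r - i with hm
  rw [add_pow, Finset.mul_sum]
  have hterm : ∀ k, (X 0 : MvPolynomial (Fin 2) K) ^ i *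
      ((C c * X 0) ^ k * X 1 ^ (m - k) * ((m.choose k : ℕ) : MvPolynomial (Fin 2) K))
      = monomial (Finsupp.single 0 (i + k) + Finsupp.single 1 (m - k))
          (c ^ k * (m.choose k : K)) := by
    intro k
    rw [← coeff_aux]
    rw [mul_pow, ← C_pow, pow_add, ← C_eq_coe_nat, C_mul]
    ring
  simp_rw [hterm]
  rw [coeff_sum]
  simp_rw [coeff_monomial]
  by_cases hij : i ≤ j
  · rw [if_pos hij]
    rw [Finset.sum_eq_single_of_mem (j - i)
      (Finset.mem_range.mpr (by omega : j - i < m + 1))]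
    · rw [if_pos ((mm_eq_iff _ _ _ _).mpr ⟨by omega, by omega⟩), mul_comm]
    · intro k _ hk
      rw [if_neg]
      intro hc
      exact hk (by have := ((mm_eq_iff _ _ _ _).mp hc).1; omega)
  · rw [if_neg hij]
    apply Finset.sum_eq_zero
    intro k _
    rw [if_neg]
    intro hc
    exact hij (by have := ((mm_eq_iff _ _ _ _).mp hc).1; omega)

private lemma lucas_pow {p : ℕ} (hp : p.Prime) (t m : ℕ) :
    ((Nat.choose m (p ^ t) : ZMod p)) = ((m / p ^ t % p : ℕ) : ZMod p) := by
  haveI : Fact p.Prime := ⟨hp⟩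
  induction t generalizing m with
  | zero => simp [Nat.choose_one_right, ZMod.natCast_mod]
  | succ t ih =>
      have H := (ZMod.natCast_eq_natCast_iff _ _ _).mpr
        (Choose.choose_modEq_choose_mod_mul_choose_div_nat (p := p) (n := m) (k := p ^ (t+1)))
      have h1 : p ^ (t+1) % p = 0 := by
        rw [pow_succ]; exact Nat.mul_mod_left _ _
      have h2 : p ^ (t+1) / p = p ^ t := by
        rw [pow_succ]; exact Nat.mul_div_cancel _ hp.pos
      rw [h1, h2] at H
      rw [H]
      push_cast
      rw [Nat.choose_zero_right]
      push_cast
      rw [one_mul, ih (m / p)]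
      rw [Nat.div_div_eq_div_mul, ← pow_succ']

private lemma choose_pow_ne_zero {p : ℕ} (hp : p.Prime) {m : ℕ} (hm : 0 < m)
    (K : Type*) [Field K] [CharP K p] :
    ((Nat.choose m (p ^ Nat.log p m) : K)) ≠ 0 := by
  haveI : Fact p.Prime := ⟨hp⟩
  set t := Nat.log p m
  have h1 : p ^ t ≤ m := Nat.pow_log_le_self p hm.ne'
  have h2 : m < p ^ (t + 1) := Nat.lt_pow_succ_log_self hp.one_lt m
  have hdiv1 : 1 ≤ m / p ^ t := (Nat.one_le_div_iff (pow_pos hp.pos t)).mpr h1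
  have hdiv2 : m / p ^ t < p := by
    rw [Nat.div_lt_iff_lt_mul (pow_pos hp.pos t)]
    rw [pow_succ] at h2; exact h2.trans_le (by rw [mul_comm])
  intro h
  rw [CharP.cast_eq_zero_iff K p] at h
  have : ((Nat.choose m (p ^ t) : ZMod p)) = 0 := by
    exact_mod_cast (ZMod.natCast_eq_zero_iff _ _).mpr h
  rw [lucas_pow hp] at this
  rw [Nat.mod_eq_of_lt hdiv2] at this
  have := (ZMod.natCast_eq_zero_iff _ _).mp this
  exact absurd (Nat.le_of_dvd hdiv1 this) (not_le.mpr hdiv2)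

private lemma keyA {K : Type*} [Field K] {r : ℕ} {G : Set (MvPolynomial (Fin 2) K)}
    (hG : ∀ P ∈ G, ∃ i ≤ r, P = X 0 ^ i * X 1 ^ (r - i))
    {w : MvPolynomial (Fin 2) K} (hw : w ∈ Submodule.span K G)
    (c : K) (j : ℕ) (hj : j ≤ r) :
    coeff (mm r j) (aeval ![X 0, C c * X 0 + X 1] w)
      = ∑ i ∈ Finset.range (j + 1),
          ((r - i).choose (j - i) : K) * c ^ (j - i) * coeff (mm r i) w := by
  induction hw using Submodule.span_induction with
  | mem w hwG =>
      obtain ⟨i, hir, rfl⟩ := hG w hwG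
      rw [map_mul, map_pow, map_pow, aeval_X, aeval_X, Matrix.cons_val_zero,
        Matrix.cons_val_one, Matrix.cons_val_zero, gen_coeff c hir hj]
      rw [Finset.sum_congr rfl (fun i' _ => by rw [gen_self_coeff (i := i) (i' := i')])]
      simp_rw [mul_ite, mul_one, mul_zero]
      rw [Finset.sum_ite_eq]
      simp [Finset.mem_range, Nat.lt_succ_iff]
  | zero => simp
  | add x y hx hy ihx ihy =>
      rw [map_add, coeff_add, ihx, ihy, ← Finset.sum_add_distrib]
      exact Finset.sum_congr rfl fun i _ => by rw [coeff_add]; ring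
  | smul a x hx ihx =>
      rw [map_smul, coeff_smul, ihx, Finset.smul_sum]
      exact Finset.sum_congr rfl fun i _ => by rw [coeff_smul]; simp; ring

private lemma keyB {K : Type*} [Field K] {r : ℕ} {G : Set (MvPolynomial (Fin 2) K)}
    (hG : ∀ P ∈ G, ∃ i ≤ r, P = X 0 ^ i * X 1 ^ (r - i))
    {w : MvPolynomial (Fin 2) K} (hw : w ∈ Submodule.span K G) :
    ∀ d ∈ w.support, ∃ i ≤ r, d = mm r i := by
  induction hw using Submodule.span_induction with
  | mem w hwG =>
      obtain ⟨i, hir, rfl⟩ := hG w hwG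
      intro d hd
      rw [gen_eq_monomial] at hd
      classical
      rw [support_monomial] at hd
      simp at hd
      exact ⟨i, hir, hd⟩
  | zero => simp
  | add x y hx hy ihx ihy =>
      intro d hd
      rcases Finset.mem_union.mp (MvPolynomial.support_add hd) with h | h
      · exact ihx d h
      · exact ihy d h
  | smul a x hx ihx =>
      intro d hd
      exact ihx d (MvPolynomial.support_smul hd)

/-- If `v ∈ W` is not a scalar multiple of `X^r`, then the
`K`-span of `{u_a v : a ∈ 𝔽}` has dimension at least `2`, where `u_a` is the
`K`-algebra endomorphism of `K[X,Y]` with `u_a X = X`, `u_a Y = ι a • X + Y`. -/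
theorem stmt_8
    (p : ℕ) (hp : p.Prime) (n : ℕ) (hn : 1 ≤ n)
    (𝔽 : Type*) [Field 𝔽] [Fintype 𝔽] (hF : Fintype.card 𝔽 = p ^ n)
    (K : Type*) [Field K] [CharP K p]
    (ι : 𝔽 →+* K)
    (r : ℕ) (hr : r < p ^ n)
    (v : MvPolynomial (Fin 2) K)
    (hv : v ∈ Submodule.span K
        {P : MvPolynomial (Fin 2) K |
          ∃ i : ℕ, i ≤ r ∧ (∀ j : ℕ, i / p ^ j % p ≤ r / p ^ j % p) ∧
            P = X 0 ^ i * X 1 ^ (r - i)})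
    (hvX : ¬ ∃ c : K, v = c • (X 0 : MvPolynomial (Fin 2) K) ^ r) :
    2 ≤ Module.rank K
      (Submodule.span K
        {w : MvPolynomial (Fin 2) K |
          ∃ a : 𝔽, w = aeval ![X 0, MvPolynomial.C (ι a) * X 0 + X 1] v}) := by
  classical
  have hG : ∀ P ∈ {P : MvPolynomial (Fin 2) K |
      ∃ i : ℕ, i ≤ r ∧ (∀ j : ℕ, i / p ^ j % p ≤ r / p ^ j % p) ∧
        P = X 0 ^ i * X 1 ^ (r - i)}, ∃ i ≤ r, P = X 0 ^ i * X 1 ^ (r - i) := by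
    rintro P ⟨i, hir, -, rfl⟩; exact ⟨i, hir, rfl⟩
  by_contra hlt
  rw [not_le] at hlt
  set S := Submodule.span K {w : MvPolynomial (Fin 2) K |
      ∃ a : 𝔽, w = aeval ![X 0, MvPolynomial.C (ι a) * X 0 + X 1] v} with hS
  have hrank1 : Module.rank K S ≤ 1 := by
    by_contra h1
    rw [not_le] at h1
    have h2 : (2 : Cardinal) ≤ Module.rank K S := by
      calc (2 : Cardinal) = 1 + 1 := by norm_num
      _ ≤ Order.succ 1 := Cardinal.add_one_le_succ 1
      _ ≤ _ := Order.succ_le_of_lt h1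
    exact absurd h2 (not_le.mpr hlt)
  haveI : Module.Free K ↥S := Module.Free.of_divisionRing K ↥S
  obtain ⟨v₀, hv₀⟩ := rank_le_one_iff.mp hrank1
  have hUmem : ∀ a : 𝔽, (aeval ![X 0, MvPolynomial.C (ι a) * X 0 + X 1] v) ∈ S :=
    fun a => Submodule.subset_span ⟨a, rfl⟩
  have hvmemS : v ∈ S := by
    have he : ![X (0 : Fin 2), MvPolynomial.C (ι (0 : 𝔽)) * X 0 + X 1] =
        (X : Fin 2 → MvPolynomial (Fin 2) K) := by
      funext idx
      fin_cases idx <;> simp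
    have h0 : aeval ![X 0, MvPolynomial.C (ι (0 : 𝔽)) * X 0 + X 1] v = v := by
      rw [he, aeval_X_left_apply]
    have := hUmem 0
    rwa [h0] at this
  have hscal : ∀ w ∈ S, ∃ c : K, w = c • (v₀ : MvPolynomial (Fin 2) K) := by
    intro w hw
    obtain ⟨c, hc⟩ := hv₀ ⟨w, hw⟩
    exact ⟨c, by simpa using congrArg Subtype.val hc.symm⟩
  have hvne : v ≠ 0 := fun h => hvX ⟨0, by simp [h]⟩
  obtain ⟨c0, hc0⟩ := hscal v hvmemS
  have hc0ne : c0 ≠ 0 := by rintro rfl; rw [zero_smul] at hc0; exact hvne hc0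
  have hmul : ∀ a : 𝔽, ∃ d : K,
      aeval ![X 0, MvPolynomial.C (ι a) * X 0 + X 1] v = d • v := by
    intro a
    obtain ⟨ca, hca⟩ := hscal _ (hUmem a)
    refine ⟨ca * c0⁻¹, ?_⟩
    rw [hca, hc0, smul_smul]
    congr 1
    field_simp
  -- find minimal nonzero coefficient
  have hex : ∃ i, coeff (mm r i) v ≠ 0 := by
    have hne : v.support.Nonempty :=
      Finset.nonempty_iff_ne_empty.mpr (fun h => hvne (support_eq_empty.mp h))
    obtain ⟨d, hd⟩ := hne
    obtain ⟨i, hir, rfl⟩ := keyB hG hv d hd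
    exact ⟨i, mem_support_iff.mp hd⟩
  set i0 := Nat.find hex with hi0def
  have hfi0 : coeff (mm r i0) v ≠ 0 := Nat.find_spec hex
  have hmin : ∀ i, i < i0 → coeff (mm r i) v = 0 :=
    fun i hi => not_not.mp (Nat.find_min hex hi)
  have hi0r : i0 ≤ r := by
    obtain ⟨i, hir, he⟩ := keyB hG hv _ (mem_support_iff.mpr hfi0)
    exact (mm_inj he) ▸ hir
  have hi0lt : i0 < r := by
    rcases lt_or_eq_of_le hi0r with h | h
    · exact h
    · exfalso
      apply hvX
      refine ⟨coeff (mm r r) v, ?_⟩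
      rw [X_pow_eq_monomial, smul_monomial, smul_eq_mul, mul_one]
      apply MvPolynomial.ext
      intro d
      rw [coeff_monomial]
      have hmmr : mm r r = Finsupp.single (0 : Fin 2) r := by
        simp [mm]
      by_cases hd : d ∈ v.support
      · obtain ⟨i, hir, rfl⟩ := keyB hG hv d hd
        rcases lt_or_eq_of_le hir with hlt' | heq
        · exact absurd (hmin i (h ▸ hlt')) (mem_support_iff.mp hd)
        · subst heq
          rw [if_pos hmmr.symm]
      · have h0 : coeff d v = 0 := notMem_support_iff.mp hd
        split_ifs with hc
        · rw [h0, hmmr, hc, h0]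
        · exact h0
  have hmpos : 0 < r - i0 := by omega
  set t := Nat.log p (r - i0) with ht
  have hptle : p ^ t ≤ r - i0 := Nat.pow_log_le_self p hmpos.ne'
  have hjj : i0 + p ^ t ≤ r := by omega
  have hptpos : 0 < p ^ t := pow_pos hp.pos t
  -- every u_a fixes v
  have hfix : ∀ a : 𝔽, aeval ![X 0, MvPolynomial.C (ι a) * X 0 + X 1] v = v := by
    intro a
    obtain ⟨d, hd⟩ := hmul a
    have h1 := keyA hG hv (ι a) i0 hi0lt.le
    have h2 : coeff (mm r i0) (aeval ![X 0, C (ι a) * X 0 + X 1] v) = coeff (mm r i0) v := by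
      rw [h1, Finset.sum_eq_single_of_mem i0 (Finset.self_mem_range_succ i0)]
      · simp
      · intro k hk hki
        have hklt : k < i0 := by
          have := Finset.mem_range.mp hk; omega
        rw [hmin k hklt, mul_zero]
    rw [hd, coeff_smul, smul_eq_mul] at h2
    have hd1 : d = 1 := mul_right_cancel₀ hfi0 (by rw [h2, one_mul])
    rw [hd, hd1, one_smul]
  have hkey : ∀ a : 𝔽, coeff (mm r (i0 + p ^ t)) v
      = ∑ i ∈ Finset.range (i0 + p ^ t + 1),
          ((r - i).choose (i0 + p ^ t - i) : K) * (ι a) ^ (i0 + p ^ t - i)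
            * coeff (mm r i) v := by
    intro a
    conv_lhs => rw [← hfix a]
    exact keyA hG hv (ι a) (i0 + p ^ t) hjj
  -- the vanishing polynomial
  set Q : Polynomial K := (∑ i ∈ Finset.range (i0 + p ^ t + 1),
      Polynomial.C (((r - i).choose (i0 + p ^ t - i) : K) * coeff (mm r i) v)
        * Polynomial.X ^ (i0 + p ^ t - i))
      - Polynomial.C (coeff (mm r (i0 + p ^ t)) v) with hQ
  have heval : ∀ a : 𝔽, Q.eval (ι a) = 0 := by
    intro a
    rw [hQ, Polynomial.eval_sub, Polynomial.eval_finset_sum, Polynomial.eval_C, sub_eq_zero,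
      hkey a]
    apply Finset.sum_congr rfl
    intro i _
    rw [Polynomial.eval_mul, Polynomial.eval_C, Polynomial.eval_pow, Polynomial.eval_X]
    ring
  have hdeg : Q.natDegree < Fintype.card 𝔽 := by
    rw [hF]
    have h1 : (∑ i ∈ Finset.range (i0 + p ^ t + 1),
        Polynomial.C (((r - i).choose (i0 + p ^ t - i) : K) * coeff (mm r i) v)
          * Polynomial.X ^ (i0 + p ^ t - i)).natDegree ≤ i0 + p ^ t :=
      Polynomial.natDegree_sum_le_of_forall_le _ _
        (fun i _ => le_trans (Polynomial.natDegree_C_mul_X_pow_le _ _) (by omega))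
    have h2 : Q.natDegree ≤ i0 + p ^ t := by
      rw [hQ]
      refine le_trans (Polynomial.natDegree_sub_le _ _) (max_le h1 (by simp))
    omega
  have hQ0 : Q = 0 :=
    Polynomial.eq_zero_of_natDegree_lt_card_of_eval_eq_zero Q ι.injective heval hdeg
  have hcoeff := congrArg (fun P => Polynomial.coeff P (p ^ t)) hQ0
  simp only [Polynomial.coeff_zero] at hcoeff
  rw [hQ, Polynomial.coeff_sub, Polynomial.finset_sum_coeff] at hcoeff
  rw [Polynomial.coeff_C, if_neg hptpos.ne'] at hcoeff
  rw [Finset.sum_eq_single_of_mem i0 (Finset.mem_range.mpr (by omega))] at hcoeff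
  · rw [Polynomial.coeff_C_mul, Polynomial.coeff_X_pow,
      if_pos (by omega : p ^ t = i0 + p ^ t - i0), mul_one, sub_zero] at hcoeff
    have hch : ((r - i0).choose (p ^ t) : K) ≠ 0 := choose_pow_ne_zero hp hmpos K
    rw [(by omega : i0 + p ^ t - i0 = p ^ t)] at hcoeff
    exact (mul_ne_zero hch hfi0) hcoeff
  · intro k hk hki
    rw [Polynomial.coeff_C_mul, Polynomial.coeff_X_pow, if_neg, mul_zero]
    have := Finset.mem_range.mp hk
    omega
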